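/- Let G be a finite simple graph on vertex set {x_1, ..., x_n} with a clique vertex partition π = {W_1, ..., W_t}, and let G^π be the clique-whiskered graph. Then Shed(G^π) is a dominating set of G^π; in fact {x_1, ..., x_n} ⊆ Shed(G^π) and this subset is a dominating set of G^π. -/

import Mathlib

open scoped Classical

variable {V : Type*}

/-- `S` is an independent set of the induced subgraph of `G` on the vertex set `A`. -/
def IsIndepIn (G : SimpleGraph V) (A S : Finset V) : Prop :=
  S ⊆ A ∧ ∀ u ∈ S, ∀ v ∈ S, ¬ G.Adj u v

/-- `S` is a maximal independent set of the induced subgraph of `G` on the vertex set `A`. -/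
def IsMaxIndepIn (G : SimpleGraph V) (A S : Finset V) : Prop :=
  IsIndepIn G A S ∧ ∀ T, IsIndepIn G A T → S ⊆ T → T = S

/-- The induced subgraph of `G` on the vertex set `A` is well-covered: all of its
maximal independent sets have the same cardinality. -/
def WellCoveredOn (G : SimpleGraph V) (A : Finset V) : Prop :=
  ∀ S T, IsMaxIndepIn G A S → IsMaxIndepIn G A T → S.card = T.card

/-- The closed neighbourhood of `x` deleted from `A`: the vertices of `A` distinct from `x`
and not adjacent to `x`. -/
noncomputable def delClosedNbhd (G : SimpleGraph V) (A : Finset V) (x : V) : Finset V :=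
  A.filter fun y => y ≠ x ∧ ¬ G.Adj x y

/-- The induced subgraph of `G` on the vertex set `A` is vertex decomposable: it is
well-covered, and either it has no edges, or some vertex `x ∈ A` is such that deleting `x`,
respectively the closed neighbourhood of `x`, leaves a vertex decomposable graph. -/
def VertexDecomposableOn (G : SimpleGraph V) (A : Finset V) : Prop :=
  WellCoveredOn G A ∧
    ((∀ u ∈ A, ∀ v ∈ A, ¬ G.Adj u v) ∨
      ∃ x, ∃ _h : x ∈ A,
        VertexDecomposableOn G (A.erase x) ∧
        VertexDecomposableOn G (delClosedNbhd G A x))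
termination_by A.card
decreasing_by
  · exact Finset.card_erase_lt_of_mem (by assumption)
  · exact Finset.card_lt_card
      (Finset.filter_ssubset.mpr ⟨x, by assumption, by simp⟩)

/-- A finite simple graph is well-covered if all of its maximal independent sets have the
same cardinality. -/
def WellCovered (G : SimpleGraph V) [Fintype V] : Prop :=
  WellCoveredOn G Finset.univ

/-- A finite simple graph is vertex decomposable. -/
def VertexDecomposable (G : SimpleGraph V) [Fintype V] : Prop :=
  VertexDecomposableOn G Finset.univ

/-- The set of shedding vertices of `G` : those vertices `x` such that both `G \ x` and
`G \ N[x]` are vertex decomposable. -/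
def Shed (G : SimpleGraph V) [Fintype V] : Set V :=
  {x | VertexDecomposableOn G (Finset.univ.erase x) ∧
       VertexDecomposableOn G (delClosedNbhd G Finset.univ x)}

/-- `D` is a dominating set of `G`: every vertex not in `D` is adjacent to a vertex of `D`. -/
def IsDominatingSet (G : SimpleGraph V) (D : Set V) : Prop :=
  ∀ v, v ∉ D → ∃ u ∈ D, G.Adj u v

/-- A vertex is simplicial if its neighbourhood induces a clique. -/
def IsSimplicialVertex (G : SimpleGraph V) (x : V) : Prop :=
  ∀ u v, G.Adj x u → G.Adj x v → u ≠ v → G.Adj u v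

/-- The clique-whiskered graph `G^π`, where the clique vertex partition `π` is given by the
fibres of a surjection `c : V → ι` (part `W i` is `c ⁻¹' {i}`, with whisker vertex `w i`):
the original edges of `G` are kept, and each `x : V` is joined to the new vertex `c x`. -/
def cliqueWhisker {V ι : Type*} (G : SimpleGraph V) (c : V → ι) : SimpleGraph (V ⊕ ι) :=
  SimpleGraph.fromRel fun p q =>
    match p, q with
    | Sum.inl u, Sum.inl v => G.Adj u v
    | Sum.inl u, Sum.inr i => c u = i
    | _, _ => False

section AuxCW

variable {V ι : Type*} {G : SimpleGraph V} {c : V → ι}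

lemma cw_ll {u v : V} : (cliqueWhisker G c).Adj (Sum.inl u) (Sum.inl v) ↔ G.Adj u v := by
  simp only [cliqueWhisker, SimpleGraph.fromRel_adj, ne_eq, Sum.inl.injEq]
  constructor
  · rintro ⟨hne, h | h⟩
    · exact h
    · exact h.symm
  · intro h
    exact ⟨h.ne, Or.inl h⟩

lemma cw_lr {u : V} {i : ι} : (cliqueWhisker G c).Adj (Sum.inl u) (Sum.inr i) ↔ c u = i := by
  simp [cliqueWhisker, SimpleGraph.fromRel_adj]

lemma cw_rl {u : V} {i : ι} : (cliqueWhisker G c).Adj (Sum.inr i) (Sum.inl u) ↔ c u = i := by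
  simp [cliqueWhisker, SimpleGraph.fromRel_adj]

lemma cw_rr {i j : ι} : ¬ (cliqueWhisker G c).Adj (Sum.inr i) (Sum.inr j) := by
  simp [cliqueWhisker, SimpleGraph.fromRel_adj]

/-- Every maximal independent set of the induced subgraph of `G^π` on
`inl '' S ∪ inr '' T` (with `c(S) ⊆ T`) has cardinality `|T|`. -/
lemma cw_maxIndep_card (hclique : ∀ u v, c u = c v → u ≠ v → G.Adj u v)
    {S : Finset V} {T : Finset ι} (hST : ∀ x ∈ S, c x ∈ T)
    {M : Finset (V ⊕ ι)}
    (hM : IsMaxIndepIn (cliqueWhisker G c) (S.image Sum.inl ∪ T.image Sum.inr) M) :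
    M.card = T.card := by
  obtain ⟨⟨hMA, hMind⟩, hmax⟩ := hM
  have memA : ∀ a ∈ M, (∃ v ∈ S, a = Sum.inl v) ∨ (∃ i ∈ T, a = Sum.inr i) := by
    intro a ha
    have := hMA ha
    simp only [Finset.mem_union, Finset.mem_image] at this
    rcases this with ⟨v, hv, rfl⟩ | ⟨i, hi, rfl⟩
    · exact Or.inl ⟨v, hv, rfl⟩
    · exact Or.inr ⟨i, hi, rfl⟩
  apply Finset.card_bij (fun a _ => Sum.elim c id a)
  · intro a ha
    rcases memA a ha with ⟨v, hv, rfl⟩ | ⟨i, hi, rfl⟩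
    · exact hST v hv
    · exact hi
  · intro a ha b hb hab
    rcases memA a ha with ⟨v, hv, rfl⟩ | ⟨i, hi, rfl⟩ <;>
      rcases memA b hb with ⟨w, hw, rfl⟩ | ⟨j, hj, rfl⟩
    · simp only [Sum.elim_inl] at hab
      by_contra hne
      have hne' : v ≠ w := fun h => hne (by rw [h])
      exact hMind _ ha _ hb (cw_ll.mpr (hclique v w hab hne'))
    · simp only [Sum.elim_inl, Sum.elim_inr] at hab
      exact absurd (cw_lr.mpr hab) (hMind _ ha _ hb)
    · simp only [Sum.elim_inl, Sum.elim_inr] at hab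
      exact absurd (cw_rl.mpr hab.symm) (hMind _ ha _ hb)
    · simp only [Sum.elim_inr, id] at hab
      exact congrArg Sum.inr hab
  · intro i hi
    by_contra hcon
    push_neg at hcon
    have hins : IsIndepIn (cliqueWhisker G c) (S.image Sum.inl ∪ T.image Sum.inr)
        (insert (Sum.inr i) M) := by
      constructor
      · intro a ha
        rcases Finset.mem_insert.mp ha with rfl | ha
        · exact Finset.mem_union_right _ (Finset.mem_image_of_mem _ hi)
        · exact hMA ha
      · intro u hu v hv
        rcases Finset.mem_insert.mp hu with rfl | hu <;>
          rcases Finset.mem_insert.mp hv with rfl | hv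
        · exact (cliqueWhisker G c).loopless.irrefl _
        · intro hadj
          rcases memA v hv with ⟨w, hw, rfl⟩ | ⟨j, hj, rfl⟩
          · exact hcon _ hv (by simpa using cw_rl.mp hadj)
          · exact cw_rr hadj
        · intro hadj
          rcases memA u hu with ⟨w, hw, rfl⟩ | ⟨j, hj, rfl⟩
          · exact hcon _ hu (by simpa using cw_lr.mp hadj)
          · exact cw_rr hadj
        · exact hMind _ hu _ hv
    have := hmax _ hins (Finset.subset_insert _ _)
    have hmem : Sum.inr i ∈ M := this ▸ Finset.mem_insert_self _ _
    exact hcon _ hmem rfl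

/-- The well-coveredness part. -/
lemma cw_wellCovered (hclique : ∀ u v, c u = c v → u ≠ v → G.Adj u v)
    {S : Finset V} {T : Finset ι} (hST : ∀ x ∈ S, c x ∈ T) :
    WellCoveredOn (cliqueWhisker G c) (S.image Sum.inl ∪ T.image Sum.inr) := by
  intro M N hM hN
  rw [cw_maxIndep_card hclique hST hM, cw_maxIndep_card hclique hST hN]

lemma vdOn_congr {W : Type*} {G' : SimpleGraph W} {A B : Finset W}
    (h : ∀ a, a ∈ A ↔ a ∈ B) (hB : VertexDecomposableOn G' B) :
    VertexDecomposableOn G' A := by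
  have : A = B := Finset.ext h
  subst this
  exact hB

/-- Main induction: the induced subgraph of `G^π` on `inl '' S ∪ inr '' T`
(with `c(S) ⊆ T`) is vertex decomposable. -/
lemma cw_main (hclique : ∀ u v, c u = c v → u ≠ v → G.Adj u v) :
    ∀ n (S : Finset V) (T : Finset ι), S.card ≤ n → (∀ x ∈ S, c x ∈ T) →
      VertexDecomposableOn (cliqueWhisker G c) (S.image Sum.inl ∪ T.image Sum.inr) := by
  intro n
  induction n with
  | zero =>
    intro S T hcard hST
    have hS : S = ∅ := Finset.card_eq_zero.mp (Nat.le_zero.mp hcard)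
    subst hS
    rw [VertexDecomposableOn]
    refine ⟨cw_wellCovered hclique hST, Or.inl ?_⟩
    intro u hu v hv
    simp only [Finset.image_empty, Finset.empty_union, Finset.mem_image] at hu hv
    obtain ⟨i, _, rfl⟩ := hu
    obtain ⟨j, _, rfl⟩ := hv
    exact cw_rr
  | succ n ih =>
    intro S T hcard hST
    rcases S.eq_empty_or_nonempty with rfl | ⟨x, hx⟩
    · exact ih ∅ T (by simp) hST
    rw [VertexDecomposableOn]
    refine ⟨cw_wellCovered hclique hST, Or.inr ⟨Sum.inl x, ?_, ?_, ?_⟩⟩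
    · exact Finset.mem_union_left _ (Finset.mem_image_of_mem _ hx)
    · refine vdOn_congr (fun a => ?_) (ih (S.erase x) T ?_ ?_)
      · cases a with
        | inl v => simp [Finset.mem_erase, and_comm]
        | inr i => simp [Finset.mem_erase]
      · have := Finset.card_erase_lt_of_mem hx
        omega
      · intro v hv
        exact hST v (Finset.mem_of_mem_erase hv)
    · refine vdOn_congr (fun a => ?_)
        (ih (S.filter fun v => v ≠ x ∧ ¬ G.Adj x v) (T.erase (c x)) ?_ ?_)
      · cases a with
        | inl v =>
          simp [delClosedNbhd, cw_ll, cw_lr]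
        | inr i =>
          simp [delClosedNbhd, cw_lr, cw_rr]
          try tauto
      · have h1 : (S.filter fun v => v ≠ x ∧ ¬ G.Adj x v) ⊆ S.erase x := by
          intro v hv
          simp only [Finset.mem_filter] at hv
          exact Finset.mem_erase.mpr ⟨hv.2.1, hv.1⟩
        have := Finset.card_le_card h1
        have := Finset.card_erase_lt_of_mem hx
        omega
      · intro v hv
        simp only [Finset.mem_filter] at hv
        refine Finset.mem_erase.mpr ⟨?_, hST v hv.1⟩
        intro h
        exact hv.2.2 (hclique x v h.symm (Ne.symm hv.2.1))

end AuxCW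

/-- For a graph `G` with a clique vertex partition (each part is a nonempty
clique), the original vertices all belong to `Shed(G^π)` and form a dominating set of `G^π`;
in particular `Shed(G^π)` is a dominating set of `G^π`. -/
theorem statement7 {V ι : Type*} [Fintype V] [Fintype ι] (G : SimpleGraph V)
    (c : V → ι) (hclique : ∀ u v, c u = c v → u ≠ v → G.Adj u v)
    (hsurj : Function.Surjective c) :
    (∀ x : V, Sum.inl x ∈ Shed (cliqueWhisker G c)) ∧
    IsDominatingSet (cliqueWhisker G c) (Set.range (Sum.inl : V → V ⊕ ι)) ∧
    IsDominatingSet (cliqueWhisker G c) (Shed (cliqueWhisker G c)) := by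
  have hshed : ∀ x : V, Sum.inl x ∈ Shed (cliqueWhisker G c) := by
    intro x
    refine ⟨?_, ?_⟩
    · refine vdOn_congr (fun a => ?_)
        (cw_main hclique (Fintype.card V) (Finset.univ.erase x) Finset.univ ?_ ?_)
      · cases a with
        | inl v => simp [Finset.mem_erase]
        | inr i => simp [Finset.mem_erase]
      · exact le_trans (Finset.card_le_card (Finset.erase_subset _ _)) le_rfl
      · intro v _; exact Finset.mem_univ _
    · refine vdOn_congr (fun a => ?_)
        (cw_main hclique (Fintype.card V)
          (Finset.univ.filter fun v => v ≠ x ∧ ¬ G.Adj x v)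
          (Finset.univ.erase (c x)) ?_ ?_)
      · cases a with
        | inl v =>
          simp [delClosedNbhd, cw_ll, cw_lr]
          try tauto
        | inr i =>
          simp [delClosedNbhd, cw_lr, cw_rr]
          try tauto
      · exact le_trans (Finset.card_le_card (Finset.filter_subset _ _)) le_rfl
      · intro v hv
        simp only [Finset.mem_filter, Finset.mem_univ, true_and] at hv
        refine Finset.mem_erase.mpr ⟨?_, Finset.mem_univ _⟩
        intro h
        exact hv.2 (hclique x v h.symm (Ne.symm hv.1))
  refine ⟨hshed, ?_, ?_⟩
  · intro v hv
    cases v with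
    | inl x => exact absurd ⟨x, rfl⟩ hv
    | inr i =>
      obtain ⟨u, rfl⟩ := hsurj i
      exact ⟨Sum.inl u, ⟨u, rfl⟩, cw_lr.mpr rfl⟩
  · intro v hv
    cases v with
    | inl x => exact absurd (hshed x) hv
    | inr i =>
      obtain ⟨u, rfl⟩ := hsurj i
      exact ⟨Sum.inl u, hshed u, cw_lr.mpr rfl⟩
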